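/- Let P ⊆ ℝ^d be a 0/1-polytope with at least two vertices such that for each pair of distinct vertices s, t ∈ vert(P) there is a uniquely edge-cube spanned wall W of P whose unique spanning affine edge-cube C contains s and t with t equal to the antipodal vertex of s in C. Then h(G(P)) ≥ 1. -/

import Mathlib

open scoped Classical

noncomputable section

/-- The number of edges of `G` leaving the set `S`, counted as ordered pairs
`(u, v)` with `u ∈ S`, `v ∉ S` and `u ~ v` (each cut edge is counted once). -/
def cutCard {V : Type*} [Fintype V] (G : SimpleGraph V) (S : Set V) : ℕ :=
  {p : V × V | p.1 ∈ S ∧ p.2 ∉ S ∧ G.Adj p.1 p.2}.ncard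

/-- The edge expansion `h(G)` of a finite graph: the infimum of `|δ(S)|/|S|`
over all nonempty `S` with `|S| ≤ |V|/2`. -/
noncomputable def edgeExpansion {V : Type*} [Fintype V] (G : SimpleGraph V) : ℝ :=
  sInf { r : ℝ | ∃ S : Set V, S.Nonempty ∧ 2 * S.ncard ≤ Fintype.card V ∧
    r = (cutCard G S : ℝ) / (S.ncard : ℝ) }
/-- All points of `X` are 0/1-vectors. -/
def IsZeroOne {ι : Type*} (X : Finset (ι → ℝ)) : Prop :=
  ∀ x ∈ X, ∀ i, x i = 0 ∨ x i = 1

/-- Two vertices `u v` of the 0/1-polytope `P = conv X` are adjacent iff they are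
distinct and there is a linear functional whose maximum over `P` is attained
exactly on the segment `[u, v]`. -/
def PolytopeAdj {ι : Type*} [Fintype ι] (X : Finset (ι → ℝ)) (u v : ι → ℝ) : Prop :=
  u ∈ X ∧ v ∈ X ∧ u ≠ v ∧ ∃ (f : (ι → ℝ) →ₗ[ℝ] ℝ) (c : ℝ),
    (∀ x ∈ convexHull ℝ (X : Set (ι → ℝ)), f x ≤ c) ∧
    {x ∈ convexHull ℝ (X : Set (ι → ℝ)) | f x = c} = segment ℝ u v

/-- The graph `G(P)` of the 0/1-polytope `P = conv X`, on the vertex set `X`. -/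
def polytopeGraph {ι : Type*} [Fintype ι] (X : Finset (ι → ℝ)) :
    SimpleGraph {x // x ∈ X} where
  Adj u v := PolytopeAdj X u.1 v.1
  symm := by
    constructor
    rintro u v ⟨hu, hv, hne, f, c, h1, h2⟩
    exact ⟨hv, hu, hne.symm, f, c, h1, by rw [h2, segment_symm]⟩
  loopless := by constructor; rintro u ⟨_, _, hne, _⟩; exact hne rfl
/-- A wall of the 0/1-polytope with vertex set `X`: a nonempty set of vertices
obtained by intersecting `X` with a face of the 0/1-cube, given by a sign vector
`σ ∈ {0,1,⋆}^ι` (encoded as `ι → Option Bool`, `none` being `⋆`). -/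
def IsWall {ι : Type*} (X : Finset (ι → ℝ)) (W : Set (ι → ℝ)) : Prop :=
  W.Nonempty ∧ ∃ σ : ι → Option Bool,
    W = {x | x ∈ X ∧ ∀ i, ∀ b, σ i = some b → x i = (if b then (1 : ℝ) else 0)}

/-- `σ(W)ᵢ = ⋆`, i.e. the points of `W` do not all agree in coordinate `i`. -/
def IsStarCoord {ι : Type*} (W : Set (ι → ℝ)) (i : ι) : Prop :=
  ∃ x ∈ W, ∃ y ∈ W, x i ≠ y i
/-- The mirror image `x^W = x ⊕ t^(W)` of a 0/1-point `x` with respect to a wall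
`W`, where `t^(W)` has ones exactly in the star coordinates of `W`. -/
def mirrorImage {ι : Type*} (W : Set (ι → ℝ)) (x : ι → ℝ) : ι → ℝ :=
  fun i => if IsStarCoord W i then 1 - x i else x i

/-- Coordinatewise addition modulo two of 0/1-vectors, realized over `ℝ`. -/
def xorVec {ι : Type*} (a b : ι → ℝ) : ι → ℝ :=
  fun i => a i + b i - 2 * a i * b i

/-- `C` is an affine edge-cube in the 0/1-polytope with vertex set `X`:
`C = {x ⊕ ε₁z⁽¹⁾ ⊕ ⋯ ⊕ εₖz⁽ᵏ⁾ : ε ∈ {0,1}^k}` for some `x ∈ C` and pairwise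
orthogonal nonzero 0/1-vectors `z⁽¹⁾, …, z⁽ᵏ⁾`, and two elements of `C` are
adjacent in `G(P)` exactly when they differ by precisely one of the `z⁽ʲ⁾`. -/
def IsAffineEdgeCube {ι : Type*} [Fintype ι] (X : Finset (ι → ℝ))
    (C : Set (ι → ℝ)) : Prop :=
  C ⊆ ↑X ∧ ∃ (k : ℕ) (x : ι → ℝ) (z : Fin k → (ι → ℝ)),
    x ∈ C ∧
    (∀ j, (∀ i, z j i = 0 ∨ z j i = 1) ∧ z j ≠ 0) ∧
    (∀ a b, a ≠ b → ∑ i, z a i * z b i = 0) ∧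
    C = {y | ∃ ε : Fin k → Bool, y = xorVec x (∑ j, if ε j then z j else 0)} ∧
    (∀ y₁ ∈ C, ∀ y₂ ∈ C, (PolytopeAdj X y₁ y₂ ↔ ∃ j, y₂ = xorVec y₁ (z j)))

/-- The wall spanned by `A`: the intersection of all walls of `P` containing `A`. -/
def spannedWall {ι : Type*} (X : Finset (ι → ℝ)) (A : Set (ι → ℝ)) : Set (ι → ℝ) :=
  ⋂₀ {W | IsWall X W ∧ A ⊆ W}

open scoped symmDiff

section AuxXor

variable {d : ℕ}

lemma xor_invol (a b : Fin d → ℝ) (hb : ∀ i, b i = 0 ∨ b i = 1) :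
    xorVec (xorVec a b) b = a := by
  funext i
  simp only [xorVec]
  rcases hb i with h | h <;> rw [h] <;> ring

lemma xor_zero (a : Fin d → ℝ) : xorVec a 0 = a := by
  funext i; simp [xorVec]

lemma xorVec_cancel_left (u a b : Fin d → ℝ) (hu : ∀ i, u i = 0 ∨ u i = 1)
    (h : xorVec u a = xorVec u b) : a = b := by
  funext i
  have hi := congrFun h i
  simp only [xorVec] at hi
  rcases hu i with h0 | h0 <;> rw [h0] at hi <;> nlinarith [hi]

section Zmach

variable {k : ℕ} (z : Fin k → (Fin d → ℝ))
  (hz01 : ∀ j i, z j i = 0 ∨ z j i = 1)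
  (horth : ∀ a b, a ≠ b → ∑ i, z a i * z b i = 0)

include hz01 horth in
lemma z_pt_disj : ∀ a b, a ≠ b → ∀ i, z a i * z b i = 0 := by
  intro a b hab i
  have hnn : ∀ i ∈ Finset.univ, 0 ≤ z a i * z b i := by
    intro i _
    rcases hz01 a i with h | h <;> rcases hz01 b i with h' | h' <;> rw [h, h'] <;> norm_num
  have := (Finset.sum_eq_zero_iff_of_nonneg hnn).1 (horth a b hab) i (Finset.mem_univ i)
  exact this

include hz01 horth in
lemma z_cases : ∀ i : Fin d, (∀ j, z j i = 0) ∨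
    (∃ j₀, z j₀ i = 1 ∧ ∀ j, j ≠ j₀ → z j i = 0) := by
  intro i
  by_cases h : ∃ j₀, z j₀ i = 1
  · obtain ⟨j₀, hj₀⟩ := h
    refine Or.inr ⟨j₀, hj₀, fun j hj => ?_⟩
    have := z_pt_disj z hz01 horth j j₀ hj i
    rw [hj₀, mul_one] at this
    exact this
  · push_neg at h
    exact Or.inl fun j => (hz01 j i).resolve_right (h j)

include hz01 horth in
lemma F_apply_of_unique {i : Fin d} {j₀ : Fin k} (hj₀ : z j₀ i = 1)
    (ho : ∀ j, j ≠ j₀ → z j i = 0) (A : Finset (Fin k)) :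
    (∑ j ∈ A, z j) i = if j₀ ∈ A then 1 else 0 := by
  rw [Finset.sum_apply]
  by_cases hA : j₀ ∈ A
  · rw [if_pos hA, Finset.sum_eq_single_of_mem j₀ hA (fun b _ hb => ho b hb), hj₀]
  · rw [if_neg hA, Finset.sum_eq_zero]
    intro j hj
    exact ho j (fun he => hA (he ▸ hj))

include hz01 horth in
lemma F_apply_of_zero {i : Fin d} (hz : ∀ j, z j i = 0) (A : Finset (Fin k)) :
    (∑ j ∈ A, z j) i = 0 := by
  rw [Finset.sum_apply]
  exact Finset.sum_eq_zero fun j _ => hz j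

include hz01 horth in
lemma F01 (A : Finset (Fin k)) : ∀ i, (∑ j ∈ A, z j) i = 0 ∨ (∑ j ∈ A, z j) i = 1 := by
  intro i
  rcases z_cases z hz01 horth i with hc | ⟨j₀, hj₀, ho⟩
  · exact Or.inl (F_apply_of_zero z hz01 horth hc A)
  · rw [F_apply_of_unique z hz01 horth hj₀ ho A]
    by_cases h : j₀ ∈ A <;> simp [h]

include hz01 horth in
lemma xor_xor (y : Fin d → ℝ) (A B : Finset (Fin k)) :
    xorVec (xorVec y (∑ j ∈ A, z j)) (∑ j ∈ B, z j) = xorVec y (∑ j ∈ (A ∆ B), z j) := by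
  funext i
  simp only [xorVec]
  rcases z_cases z hz01 horth i with hc | ⟨j₀, hj₀, ho⟩
  · rw [F_apply_of_zero z hz01 horth hc A, F_apply_of_zero z hz01 horth hc B,
      F_apply_of_zero z hz01 horth hc (A ∆ B)]
    ring
  · rw [F_apply_of_unique z hz01 horth hj₀ ho A, F_apply_of_unique z hz01 horth hj₀ ho B,
      F_apply_of_unique z hz01 horth hj₀ ho (A ∆ B)]
    by_cases hA : j₀ ∈ A <;> by_cases hB : j₀ ∈ B <;>
      simp [hA, hB, Finset.mem_symmDiff] <;> ring

include hz01 horth in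
lemma z_inj (hznz : ∀ j, z j ≠ 0) : Function.Injective z := by
  intro a b hab
  by_contra hne
  apply hznz a
  funext i
  have h1 := z_pt_disj z hz01 horth a b hne i
  rw [← hab] at h1
  rcases hz01 a i with h | h
  · rw [h]; rfl
  · rw [h] at h1; norm_num at h1

end Zmach
end AuxXor
section CubeAux

variable {d : ℕ} {X : Finset (Fin d → ℝ)} {C : Set (Fin d → ℝ)}

noncomputable def cubeK (X : Finset (Fin d → ℝ)) (C : Set (Fin d → ℝ))
    (h : IsAffineEdgeCube X C) : ℕ := h.2.choose

noncomputable def cubeX (X : Finset (Fin d → ℝ)) (C : Set (Fin d → ℝ))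
    (h : IsAffineEdgeCube X C) : Fin d → ℝ := h.2.choose_spec.choose

noncomputable def cubeZ (X : Finset (Fin d → ℝ)) (C : Set (Fin d → ℝ))
    (h : IsAffineEdgeCube X C) : Fin (cubeK X C h) → (Fin d → ℝ) :=
  h.2.choose_spec.choose_spec.choose

lemma cubeSpec (h : IsAffineEdgeCube X C) :
    cubeX X C h ∈ C ∧
    (∀ j, (∀ i, cubeZ X C h j i = 0 ∨ cubeZ X C h j i = 1) ∧ cubeZ X C h j ≠ 0) ∧
    (∀ a b, a ≠ b → ∑ i, cubeZ X C h a i * cubeZ X C h b i = 0) ∧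
    C = {y | ∃ ε : Fin (cubeK X C h) → Bool,
      y = xorVec (cubeX X C h) (∑ j, if ε j then cubeZ X C h j else 0)} ∧
    (∀ y₁ ∈ C, ∀ y₂ ∈ C,
      (PolytopeAdj X y₁ y₂ ↔ ∃ j, y₂ = xorVec y₁ (cubeZ X C h j))) :=
  h.2.choose_spec.choose_spec.choose_spec

lemma cube_z01 (h : IsAffineEdgeCube X C) :
    ∀ j i, cubeZ X C h j i = 0 ∨ cubeZ X C h j i = 1 :=
  fun j i => ((cubeSpec h).2.1 j).1 i

lemma cube_orth (h : IsAffineEdgeCube X C) :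
    ∀ a b, a ≠ b → ∑ i, cubeZ X C h a i * cubeZ X C h b i = 0 :=
  (cubeSpec h).2.2.1

lemma mem_cube_iff (h : IsAffineEdgeCube X C) (y : Fin d → ℝ) :
    y ∈ C ↔ ∃ A : Finset (Fin (cubeK X C h)),
      y = xorVec (cubeX X C h) (∑ j ∈ A, cubeZ X C h j) := by
  conv_lhs => rw [(cubeSpec h).2.2.2.1]
  constructor
  · rintro ⟨ε, rfl⟩
    refine ⟨Finset.univ.filter (fun j => ε j = true), ?_⟩
    rw [Finset.sum_filter]
  · rintro ⟨A, rfl⟩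
    refine ⟨fun j => decide (j ∈ A), ?_⟩
    congr 1
    rw [← Finset.sum_filter]
    congr 1
    ext j
    simp

lemma star_iff_cube (hX01 : IsZeroOne X) (h : IsAffineEdgeCube X C) (i : Fin d) :
    IsStarCoord C i ↔ ∃ j, cubeZ X C h j i = 1 := by
  set k := cubeK X C h
  set x := cubeX X C h
  set z := cubeZ X C h
  have hz01 := cube_z01 h
  have horth := cube_orth h
  constructor
  · rintro ⟨a, ha, b, hb, hab⟩
    by_contra hno
    push_neg at hno
    have hz0 : ∀ j, z j i = 0 := fun j => ((cubeSpec h).2.1 j).1 i |>.resolve_right (hno j)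
    obtain ⟨A, rfl⟩ := (mem_cube_iff h a).1 ha
    obtain ⟨B, rfl⟩ := (mem_cube_iff h b).1 hb
    apply hab
    simp only [xorVec, F_apply_of_zero (cubeZ X C h) hz01 horth hz0 A,
      F_apply_of_zero (cubeZ X C h) hz01 horth hz0 B]
  · rintro ⟨j₀, hj₀⟩
    have ho : ∀ j, j ≠ j₀ → z j i = 0 := by
      intro j hj
      have := z_pt_disj z hz01 horth j j₀ hj i
      rw [hj₀, mul_one] at this; exact this
    have hx : x ∈ C := (cubeSpec h).1
    have hx2 : xorVec x (∑ j ∈ ({j₀} : Finset (Fin k)), z j) ∈ C :=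
      (mem_cube_iff h _).2 ⟨{j₀}, rfl⟩
    refine ⟨x, hx, _, hx2, ?_⟩
    simp only [xorVec, F_apply_of_unique z hz01 horth hj₀ ho ({j₀} : Finset (Fin k)),
      Finset.mem_singleton, if_pos rfl]
    have hxi := hX01 x (h.1 hx) i
    rcases hxi with h0 | h0 <;> rw [h0] <;> norm_num [hj₀]

lemma mirror_eq_xor (hX01 : IsZeroOne X) (h : IsAffineEdgeCube X C) (u : Fin d → ℝ) :
    mirrorImage C u = xorVec u (∑ j, cubeZ X C h j) := by
  set k := cubeK X C h
  set z := cubeZ X C h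
  have hz01 := cube_z01 h
  have horth := cube_orth h
  funext i
  simp only [mirrorImage, xorVec]
  rcases z_cases z hz01 horth i with hc | ⟨j₀, hj₀, ho⟩
  · rw [if_neg, F_apply_of_zero z hz01 horth hc Finset.univ]
    · ring
    · rw [star_iff_cube hX01 h i]
      push_neg
      intro j
      show z j i ≠ 1
      rw [hc j]; norm_num
  · rw [if_pos, F_apply_of_unique z hz01 horth hj₀ ho Finset.univ,
      if_pos (Finset.mem_univ j₀)]
    · ring
    · exact (star_iff_cube hX01 h i).2 ⟨j₀, hj₀⟩

lemma mirror_mem (hX01 : IsZeroOne X) (h : IsAffineEdgeCube X C) {u : Fin d → ℝ}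
    (hu : u ∈ C) : mirrorImage C u ∈ C := by
  obtain ⟨A, rfl⟩ := (mem_cube_iff h u).1 hu
  rw [mirror_eq_xor hX01 h, xor_xor _ (cube_z01 h) (cube_orth h)]
  exact (mem_cube_iff h _).2 ⟨_, rfl⟩

end CubeAux
section RecoverAux

variable {d : ℕ} {X : Finset (Fin d → ℝ)} {C : Set (Fin d → ℝ)}

/-- Recover the path start from the cube and the crossing edge. -/
noncomputable def recoverS (X : Finset (Fin d → ℝ)) (C : Set (Fin d → ℝ))
    (u v : Fin d → ℝ) : Fin d → ℝ :=
  if h : IsAffineEdgeCube X C then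
    if hr : ∃ r : Fin (cubeK X C h), v = xorVec u (cubeZ X C h r) then
      xorVec u (∑ j ∈ Finset.univ.filter
        (fun j : Fin (cubeK X C h) => (j : ℕ) < (hr.choose : ℕ)), cubeZ X C h j)
    else u
  else u

lemma recover_spec (h : IsAffineEdgeCube X C) (u v : Fin d → ℝ)
    (hu01 : ∀ i, u i = 0 ∨ u i = 1) (r : Fin (cubeK X C h))
    (hv : v = xorVec u (cubeZ X C h r)) :
    recoverS X C u v = xorVec u (∑ j ∈ Finset.univ.filter
      (fun j : Fin (cubeK X C h) => (j : ℕ) < (r : ℕ)), cubeZ X C h j) := by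
  have hr : ∃ r' : Fin (cubeK X C h), v = xorVec u (cubeZ X C h r') := ⟨r, hv⟩
  have hre : hr.choose = r := by
    apply z_inj (cubeZ X C h) (cube_z01 h) (cube_orth h) (fun j => ((cubeSpec h).2.1 j).2)
    apply xorVec_cancel_left u _ _ hu01
    rw [← hr.choose_spec, hv]
  rw [recoverS, dif_pos h, dif_pos hr, hre]

end RecoverAux

section WallAux

variable {d : ℕ} {X : Finset (Fin d → ℝ)} {C : Set (Fin d → ℝ)}

lemma spannedWall_eq (hX01 : IsZeroOne X) (hCX : C ⊆ ↑X) {u : Fin d → ℝ} (hu : u ∈ C) :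
    spannedWall X C = {y | y ∈ (X : Set (Fin d → ℝ)) ∧
      ∀ i, ¬ IsStarCoord C i → y i = u i} := by
  set W₀ : Set (Fin d → ℝ) :=
    {y | y ∈ (X : Set (Fin d → ℝ)) ∧ ∀ i, ¬ IsStarCoord C i → y i = u i} with hW₀
  have huX : u ∈ X := hCX hu
  have hW₀wall : IsWall X W₀ := by
    refine ⟨⟨u, huX, fun i _ => rfl⟩, ?_⟩
    refine ⟨fun i => if IsStarCoord C i then none
      else if u i = 1 then some true else some false, ?_⟩
    ext y
    simp only [hW₀, Set.mem_setOf_eq, Finset.coe_sort_coe, Finset.mem_coe]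
    constructor
    · rintro ⟨hyX, hy⟩
      refine ⟨hyX, fun i b hb => ?_⟩
      by_cases hs : IsStarCoord C i
      · rw [if_pos hs] at hb; exact absurd hb (by simp)
      · rw [if_neg hs] at hb
        by_cases hu1 : u i = 1
        · rw [if_pos hu1] at hb
          obtain rfl : b = true := (Option.some_injective _ hb).symm
          rw [hy i hs, hu1]; norm_num
        · rw [if_neg hu1] at hb
          obtain rfl : b = false := (Option.some_injective _ hb).symm
          have hu0 : u i = 0 := (hX01 u huX i).resolve_right hu1
          rw [hy i hs, hu0]; norm_num
    · rintro ⟨hyX, hy⟩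
      refine ⟨hyX, fun i hs => ?_⟩
      by_cases hu1 : u i = 1
      · have := hy i true (by rw [if_neg hs, if_pos hu1])
        rw [this, hu1]
        norm_num
      · have hu0 : u i = 0 := (hX01 u huX i).resolve_right hu1
        have := hy i false (by rw [if_neg hs, if_neg hu1])
        rw [this, hu0]
        norm_num
  have hCW₀ : C ⊆ W₀ := by
    intro c hc
    refine ⟨hCX hc, fun i hs => ?_⟩
    by_contra hne
    exact hs ⟨c, hc, u, hu, hne⟩
  have hmin : ∀ W, IsWall X W → C ⊆ W → W₀ ⊆ W := by
    rintro W ⟨hne, σ', rfl⟩ hCW y ⟨hyX, hy⟩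
    refine ⟨hyX, fun i b hb => ?_⟩
    have hns : ¬ IsStarCoord C i := by
      rintro ⟨a, ha, a', ha', hne'⟩
      exact hne' (((hCW ha).2 i b hb).trans ((hCW ha').2 i b hb).symm)
    rw [hy i hns]
    exact (hCW hu).2 i b hb
  apply subset_antisymm
  · exact Set.sInter_subset_of_mem ⟨hW₀wall, hCW₀⟩
  · exact Set.subset_sInter fun W hW => hmin W hW.1 hW.2

lemma cube_eq_of_mirror_eq {Cp Cq : Set (Fin d → ℝ)} (hX01 : IsZeroOne X)
    (hp : IsAffineEdgeCube X Cp) (hq : IsAffineEdgeCube X Cq)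
    (huniq : ∀ C', IsAffineEdgeCube X C' → spannedWall X C' = spannedWall X Cq → C' = Cq)
    {u : Fin d → ℝ} (hup : u ∈ Cp) (huq : u ∈ Cq)
    (hm : mirrorImage Cp u = mirrorImage Cq u) : Cp = Cq := by
  have hu01 : ∀ i, u i = 0 ∨ u i = 1 := hX01 u (hp.1 hup)
  have hstar : ∀ i, IsStarCoord Cp i ↔ IsStarCoord Cq i := by
    intro i
    have hi := congrFun hm i
    simp only [mirrorImage] at hi
    constructor
    · intro hs
      by_contra hs'
      rw [if_pos hs, if_neg hs'] at hi
      rcases hu01 i with h0 | h0 <;> rw [h0] at hi <;> norm_num at hi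
    · intro hs
      by_contra hs'
      rw [if_neg hs', if_pos hs] at hi
      rcases hu01 i with h0 | h0 <;> rw [h0] at hi <;> norm_num at hi
  apply huniq Cp hp
  rw [spannedWall_eq hX01 hp.1 hup, spannedWall_eq hX01 hq.1 huq]
  ext y
  simp only [Set.mem_setOf_eq]
  constructor
  · rintro ⟨h1, h2⟩; exact ⟨h1, fun i hs => h2 i (fun hc => hs ((hstar i).1 hc))⟩
  · rintro ⟨h1, h2⟩; exact ⟨h1, fun i hs => h2 i (fun hc => hs ((hstar i).2 hc))⟩

lemma mirror_ne_mirror {Cp Cq : Set (Fin d → ℝ)} {u v : Fin d → ℝ}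
    (hup : u ∈ Cp) (hvp : v ∈ Cp) (huq : u ∈ Cq) (hvq : v ∈ Cq)
    (huv : u ≠ v) : mirrorImage Cp u ≠ mirrorImage Cq v := by
  intro heq
  obtain ⟨i, hi⟩ : ∃ i, u i ≠ v i := by
    by_contra hno
    push_neg at hno
    exact huv (funext hno)
  have hsp : IsStarCoord Cp i := ⟨u, hup, v, hvp, hi⟩
  have hsq : IsStarCoord Cq i := ⟨u, huq, v, hvq, hi⟩
  have := congrFun heq i
  simp only [mirrorImage, if_pos hsp, if_pos hsq] at this
  apply hi
  linarith

lemma exists_cross (f : ℕ → Prop) : ∀ (k : ℕ), f 0 → ¬ f k →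
    ∃ m, m < k ∧ f m ∧ ¬ f (m + 1) := by
  intro k
  induction k with
  | zero => intro h0 hk; exact absurd h0 hk
  | succ n ih =>
    intro h0 hk
    by_cases hn : f n
    · exact ⟨n, n.lt_succ_self, hn, hk⟩
    · obtain ⟨m, hm, h1, h2⟩ := ih h0 hn
      exact ⟨m, hm.trans n.lt_succ_self, h1, h2⟩

end WallAux
section Package

variable {d : ℕ}

lemma pair_package (X : Finset (Fin d → ℝ)) (hX01 : IsZeroOne X)
    (inS : (Fin d → ℝ) → Prop) {s t : Fin d → ℝ}
    (hsS : inS s) (htS : ¬ inS t)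
    {C : Set (Fin d → ℝ)} (hC : IsAffineEdgeCube X C) (hsC : s ∈ C)
    (htm : t = mirrorImage C s) :
    ∃ u v : Fin d → ℝ, u ∈ C ∧ v ∈ C ∧ inS u ∧ ¬ inS v ∧
      PolytopeAdj X u v ∧ s = recoverS X C u v := by
  classical
  have hz01 := cube_z01 hC
  have horth := cube_orth hC
  obtain ⟨E, hE⟩ := (mem_cube_iff hC s).1 hsC
  set R : ℕ → Finset (Fin (cubeK X C hC)) :=
    fun m => Finset.univ.filter (fun j => (j : ℕ) < m) with hRdef
  set y : ℕ → (Fin d → ℝ) := fun m => xorVec s (∑ j ∈ R m, cubeZ X C hC j) with hydef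
  have hymem : ∀ m, y m ∈ C := by
    intro m
    show xorVec s (∑ j ∈ R m, cubeZ X C hC j) ∈ C
    rw [hE, xor_xor _ hz01 horth]
    exact (mem_cube_iff hC _).2 ⟨_, rfl⟩
  have hy0 : y 0 = s := by
    show xorVec s (∑ j ∈ R 0, cubeZ X C hC j) = s
    have hR0 : R 0 = ∅ := by ext j; simp [hRdef]
    rw [hR0, Finset.sum_empty, xor_zero]
  have hyk : y (cubeK X C hC) = t := by
    show xorVec s (∑ j ∈ R (cubeK X C hC), cubeZ X C hC j) = t
    have hRk : R (cubeK X C hC) = Finset.univ := by ext j; simp [hRdef, j.isLt]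
    rw [hRk, htm, mirror_eq_xor hX01 hC]
  obtain ⟨m, hmk, h1, h2⟩ := exists_cross (fun m => inS (y m)) (cubeK X C hC)
    (by show inS (y 0); rw [hy0]; exact hsS) (by show ¬ inS (y (cubeK X C hC)); rw [hyk]; exact htS)
  have hdisj : Disjoint (R m) ({(⟨m, hmk⟩ : Fin (cubeK X C hC))} : Finset _) := by
    simp [Finset.disjoint_singleton_right, hRdef]
  have hsymm : R m ∆ ({(⟨m, hmk⟩ : Fin (cubeK X C hC))} : Finset _) = R (m + 1) := by
    rw [hdisj.symmDiff_eq_sup]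
    ext j
    simp only [Finset.sup_eq_union, Finset.mem_union, Finset.mem_filter, Finset.mem_univ,
      true_and, Finset.mem_singleton, hRdef, Fin.ext_iff]
    omega
  have hstep : y (m + 1) = xorVec (y m) (cubeZ X C hC ⟨m, hmk⟩) := by
    show xorVec s (∑ j ∈ R (m + 1), cubeZ X C hC j)
      = xorVec (xorVec s (∑ j ∈ R m, cubeZ X C hC j)) (cubeZ X C hC ⟨m, hmk⟩)
    rw [show cubeZ X C hC ⟨m, hmk⟩
        = ∑ j ∈ ({(⟨m, hmk⟩ : Fin (cubeK X C hC))} : Finset _), cubeZ X C hC j from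
      (Finset.sum_singleton _ _).symm]
    rw [xor_xor _ hz01 horth, hsymm]
  have hadj : PolytopeAdj X (y m) (y (m + 1)) :=
    ((cubeSpec hC).2.2.2.2 (y m) (hymem m) (y (m + 1)) (hymem (m + 1))).2 ⟨⟨m, hmk⟩, hstep⟩
  have hu01 : ∀ i, y m i = 0 ∨ y m i = 1 := fun i => hX01 _ (hC.1 (hymem m)) i
  have hsrec : s = recoverS X C (y m) (y (m + 1)) := by
    rw [recover_spec hC (y m) (y (m + 1)) hu01 ⟨m, hmk⟩ hstep]
    exact (xor_invol s _ (F01 (cubeZ X C hC) hz01 horth (R m))).symm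
  exact ⟨y m, y (m + 1), hymem m, hymem (m + 1), h1, h2, hadj, hsrec⟩

end Package
section MainCount

variable {d : ℕ}

lemma main_count (X : Finset (Fin d → ℝ)) (hX01 : IsZeroOne X)
    (h : ∀ s ∈ X, ∀ t ∈ X, s ≠ t →
      ∃ C : Set (Fin d → ℝ), IsAffineEdgeCube X C ∧
        (∀ C' : Set (Fin d → ℝ), IsAffineEdgeCube X C' →
          spannedWall X C' = spannedWall X C → C' = C) ∧
        s ∈ C ∧ t = mirrorImage C s)
    (inS : (Fin d → ℝ) → Prop) :
    2 * ((X.filter inS) ×ˢ (X.filter (fun a => ¬ inS a))).card ≤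
      ((X ×ˢ X).filter (fun p => inS p.1 ∧ ¬ inS p.2 ∧ PolytopeAdj X p.1 p.2)).card
        * X.card := by
  classical
  set SF := X.filter inS with hSF
  set TF := X.filter (fun a => ¬ inS a) with hTF
  set cutF := (X ×ˢ X).filter (fun p => inS p.1 ∧ ¬ inS p.2 ∧ PolytopeAdj X p.1 p.2)
    with hcutF
  have hex : ∀ p : (Fin d → ℝ) × (Fin d → ℝ), ∃ (C : Set (Fin d → ℝ))
      (u v : Fin d → ℝ), p ∈ SF ×ˢ TF →
      (IsAffineEdgeCube X C ∧
       (∀ C', IsAffineEdgeCube X C' → spannedWall X C' = spannedWall X C → C' = C) ∧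
       u ∈ C ∧ v ∈ C ∧ inS u ∧ ¬ inS v ∧ PolytopeAdj X u v ∧
       p.1 = recoverS X C u v ∧ p.2 = mirrorImage C p.1) := by
    intro p
    by_cases hp : p ∈ SF ×ˢ TF
    · obtain ⟨hp1, hp2⟩ := Finset.mem_product.1 hp
      rw [hSF, Finset.mem_filter] at hp1
      rw [hTF, Finset.mem_filter] at hp2
      have hne : p.1 ≠ p.2 := fun he => hp2.2 (he ▸ hp1.2)
      obtain ⟨C, hC, huniq, hsC, htm⟩ := h p.1 hp1.1 p.2 hp2.1 hne
      obtain ⟨u, v, h1, h2, h3, h4, h5, h6⟩ :=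
        pair_package X hX01 inS hp1.2 hp2.2 hC hsC htm
      exact ⟨C, u, v, fun _ => ⟨hC, huniq, h1, h2, h3, h4, h5, h6, htm⟩⟩
    · exact ⟨∅, 0, 0, fun hp' => absurd hp' hp⟩
  choose Cf uf vf hf using hex
  have hmap : ∀ p ∈ SF ×ˢ TF, (uf p, vf p) ∈ cutF := by
    intro p hp
    obtain ⟨hC, huniq, hu, hv, hiu, hiv, hadj, hrec, hmir⟩ := hf p hp
    rw [hcutF, Finset.mem_filter, Finset.mem_product]
    exact ⟨⟨hadj.1, hadj.2.1⟩, hiu, hiv, hadj⟩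
  have hedge : ∀ e ∈ cutF,
      2 * ((SF ×ˢ TF).filter (fun p => (uf p, vf p) = e)).card ≤ X.card := by
    intro e he
    set fib := (SF ×ˢ TF).filter (fun p => (uf p, vf p) = e) with hfib
    have hfibmem : ∀ p ∈ fib, p ∈ SF ×ˢ TF ∧ uf p = e.1 ∧ vf p = e.2 := by
      intro p hp
      rw [hfib, Finset.mem_filter] at hp
      exact ⟨hp.1, congrArg Prod.fst hp.2, congrArg Prod.snd hp.2⟩
    have hpeq : ∀ p ∈ fib, ∀ q ∈ fib, Cf p = Cf q → p = q := by
      intro p hp q hq hCC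
      obtain ⟨hpm, hpu, hpv⟩ := hfibmem p hp
      obtain ⟨hqm, hqu, hqv⟩ := hfibmem q hq
      obtain ⟨_, _, _, _, _, _, _, hrecp, hmirp⟩ := hf p hpm
      obtain ⟨_, _, _, _, _, _, _, hrecq, hmirq⟩ := hf q hqm
      have h1 : p.1 = q.1 := by rw [hrecp, hrecq, hpu, hpv, hqu, hqv, hCC]
      have h2 : p.2 = q.2 := by rw [hmirp, hmirq, hCC, h1]
      exact Prod.ext h1 h2
    have hinj1 : Set.InjOn (fun p => mirrorImage (Cf p) e.1) ↑fib := by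
      intro p hp q hq hm
      have hp' := Finset.mem_coe.1 hp
      have hq' := Finset.mem_coe.1 hq
      obtain ⟨hpm, hpu, hpv⟩ := hfibmem p hp'
      obtain ⟨hqm, hqu, hqv⟩ := hfibmem q hq'
      obtain ⟨hCp, _, hup, hvp, _, _, _, _, _⟩ := hf p hpm
      obtain ⟨hCq, huniqq, huq, hvq, _, _, _, _, _⟩ := hf q hqm
      exact hpeq p hp' q hq'
        (cube_eq_of_mirror_eq hX01 hCp hCq huniqq (hpu ▸ hup) (hqu ▸ huq) hm)
    have hinj2 : Set.InjOn (fun p => mirrorImage (Cf p) e.2) ↑fib := by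
      intro p hp q hq hm
      have hp' := Finset.mem_coe.1 hp
      have hq' := Finset.mem_coe.1 hq
      obtain ⟨hpm, hpu, hpv⟩ := hfibmem p hp'
      obtain ⟨hqm, hqu, hqv⟩ := hfibmem q hq'
      obtain ⟨hCp, _, hup, hvp, _, _, _, _, _⟩ := hf p hpm
      obtain ⟨hCq, huniqq, huq, hvq, _, _, _, _, _⟩ := hf q hqm
      exact hpeq p hp' q hq'
        (cube_eq_of_mirror_eq hX01 hCp hCq huniqq (hpv ▸ hvp) (hqv ▸ hvq) hm)
    have hcard1 : (fib.image (fun p => mirrorImage (Cf p) e.1)).card = fib.card :=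
      Finset.card_image_of_injOn hinj1
    have hcard2 : (fib.image (fun p => mirrorImage (Cf p) e.2)).card = fib.card :=
      Finset.card_image_of_injOn hinj2
    have hdisj : Disjoint (fib.image (fun p => mirrorImage (Cf p) e.1))
        (fib.image (fun p => mirrorImage (Cf p) e.2)) := by
      rw [Finset.disjoint_left]
      rintro w hw1 hw2
      obtain ⟨p, hp, hwp⟩ := Finset.mem_image.1 hw1
      obtain ⟨q, hq, hwq⟩ := Finset.mem_image.1 hw2
      obtain ⟨hpm, hpu, hpv⟩ := hfibmem p hp
      obtain ⟨hqm, hqu, hqv⟩ := hfibmem q hq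
      obtain ⟨hCp, _, hup, hvp, hiu, _, _, _, _⟩ := hf p hpm
      obtain ⟨hCq, _, huq, hvq, _, hiv, _, _, _⟩ := hf q hqm
      have hne : e.1 ≠ e.2 := by
        intro hee
        exact (hqv ▸ hiv) (hee ▸ (hpu ▸ hiu))
      exact mirror_ne_mirror (hpu ▸ hup) (hpv ▸ hvp) (hqu ▸ huq) (hqv ▸ hvq) hne
        (hwp.trans hwq.symm)
    have hsub : fib.image (fun p => mirrorImage (Cf p) e.1) ∪
        fib.image (fun p => mirrorImage (Cf p) e.2) ⊆ X := by
      intro w hw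
      rcases Finset.mem_union.1 hw with hw | hw <;>
        obtain ⟨p, hp, rfl⟩ := Finset.mem_image.1 hw <;>
        obtain ⟨hpm, hpu, hpv⟩ := hfibmem p hp
      · obtain ⟨hCp, _, hup, hvp, _, _, _, _, _⟩ := hf p hpm
        exact Finset.mem_coe.1 (hCp.1 (mirror_mem hX01 hCp (hpu ▸ hup)))
      · obtain ⟨hCp, _, hup, hvp, _, _, _, _, _⟩ := hf p hpm
        exact Finset.mem_coe.1 (hCp.1 (mirror_mem hX01 hCp (hpv ▸ hvp)))
    calc 2 * fib.card
        = (fib.image (fun p => mirrorImage (Cf p) e.1)).card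
          + (fib.image (fun p => mirrorImage (Cf p) e.2)).card := by
          rw [hcard1, hcard2]; ring
      _ = (fib.image (fun p => mirrorImage (Cf p) e.1)
          ∪ fib.image (fun p => mirrorImage (Cf p) e.2)).card :=
          (Finset.card_union_of_disjoint hdisj).symm
      _ ≤ X.card := Finset.card_le_card hsub
  calc 2 * (SF ×ˢ TF).card
      = ∑ e ∈ cutF, 2 * ((SF ×ˢ TF).filter (fun p => (uf p, vf p) = e)).card := by
        rw [Finset.card_eq_sum_card_fiberwise hmap, Finset.mul_sum]
    _ ≤ ∑ _e ∈ cutF, X.card := Finset.sum_le_sum hedge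
    _ = cutF.card * X.card := by rw [Finset.sum_const, smul_eq_mul]

end MainCount

/-- Let `P ⊆ ℝ^d` be a 0/1-polytope with at least two vertices
such that for each pair of distinct vertices `s, t` there is a uniquely
edge-cube spanned wall of `P` whose unique spanning affine edge-cube `C`
contains `s` and `t`, with `t` the antipodal vertex of `s` in `C` (i.e. the
mirror image of `s` with respect to the star coordinates of `C`). Then
`h(G(P)) ≥ 1`. -/
theorem expansion_of_uniquely_edgeCube_spanned {d : ℕ} (X : Finset (Fin d → ℝ))
    (hX01 : IsZeroOne X) (hcard : 2 ≤ X.card)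
    (h : ∀ s ∈ X, ∀ t ∈ X, s ≠ t →
      ∃ C : Set (Fin d → ℝ), IsAffineEdgeCube X C ∧
        (∀ C' : Set (Fin d → ℝ), IsAffineEdgeCube X C' →
          spannedWall X C' = spannedWall X C → C' = C) ∧
        s ∈ C ∧ t = mirrorImage C s) :
    1 ≤ edgeExpansion (polytopeGraph X) := by
  classical
  have hcardV : Fintype.card {x // x ∈ X} = X.card := Fintype.card_coe X
  have key : ∀ S : Set {x // x ∈ X}, 2 * S.ncard ≤ Fintype.card {x // x ∈ X} →
      S.ncard ≤ cutCard (polytopeGraph X) S := by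
    intro S hS
    set inS : (Fin d → ℝ) → Prop :=
      fun a => ∃ ha : a ∈ X, (⟨a, ha⟩ : {x // x ∈ X}) ∈ S with hinS
    set SF := X.filter inS with hSF
    set TF := X.filter (fun a => ¬ inS a) with hTF
    set cutF := (X ×ˢ X).filter
      (fun p => inS p.1 ∧ ¬ inS p.2 ∧ PolytopeAdj X p.1 p.2) with hcutF
    have ha : S.ncard = SF.card := by
      rw [Set.ncard_eq_toFinset_card']
      apply Finset.card_bij
        (fun (a : {x // x ∈ X}) (_ : a ∈ S.toFinset) => (a : Fin d → ℝ))
      · intro a haa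
        rw [hSF, Finset.mem_filter]
        exact ⟨a.2, a.2, Set.mem_toFinset.1 haa⟩
      · intro a1 ha1 a2 ha2 he
        exact Subtype.ext he
      · intro b hb
        rw [hSF, Finset.mem_filter] at hb
        obtain ⟨hbX, hb', hmem⟩ := hb
        exact ⟨⟨b, hb'⟩, Set.mem_toFinset.2 hmem, rfl⟩
    have hb : cutCard (polytopeGraph X) S = cutF.card := by
      rw [cutCard, Set.ncard_eq_toFinset_card']
      apply Finset.card_bij
        (fun (p : {x // x ∈ X} × {x // x ∈ X}) (_ : p ∈ Set.toFinset _) =>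
          ((p.1 : Fin d → ℝ), (p.2 : Fin d → ℝ)))
      · intro p hp
        rw [Set.mem_toFinset] at hp
        obtain ⟨h1, h2, h3⟩ := hp
        rw [hcutF, Finset.mem_filter, Finset.mem_product]
        refine ⟨⟨p.1.2, p.2.2⟩, ⟨p.1.2, h1⟩, ?_, h3⟩
        rintro ⟨hb', hmem⟩
        exact h2 hmem
      · intro p1 hp1 p2 hp2 he
        exact Prod.ext (Subtype.ext (congrArg Prod.fst he))
          (Subtype.ext (congrArg Prod.snd he))
      · intro b hb
        rw [hcutF, Finset.mem_filter, Finset.mem_product] at hb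
        obtain ⟨⟨hb1, hb2⟩, hi1, hi2, hadj⟩ := hb
        obtain ⟨hb1', hmem⟩ := hi1
        refine ⟨(⟨b.1, hb1⟩, ⟨b.2, hb2⟩), ?_, rfl⟩
        rw [Set.mem_toFinset]
        exact ⟨hmem, fun hc => hi2 ⟨hb2, hc⟩, hadj⟩
    have hmc := main_count X hX01 h inS
    have hsum : SF.card + TF.card = X.card := by
      rw [hSF, hTF]
      exact Finset.card_filter_add_card_filter_not (p := inS)
    rw [ha, hcardV] at hS
    have hprod : (SF ×ˢ TF).card = SF.card * TF.card := Finset.card_product _ _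
    have hfinal : SF.card * X.card ≤ cutF.card * X.card := by
      calc SF.card * X.card = SF.card * (SF.card + TF.card) := by rw [hsum]
        _ ≤ SF.card * (2 * TF.card) := Nat.mul_le_mul_left _ (by omega)
        _ = 2 * (SF ×ˢ TF).card := by rw [hprod]; ring
        _ ≤ cutF.card * X.card := by
          rw [hSF, hTF, hcutF]
          convert hmc using 5
    rw [ha, hb]
    exact Nat.le_of_mul_le_mul_right hfinal (by omega)
  rw [edgeExpansion]
  apply le_csInf
  · obtain ⟨v₀, hv₀⟩ := Finset.card_pos.1 (show 0 < X.card by omega)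
    refine ⟨(cutCard (polytopeGraph X)
        ({⟨v₀, hv₀⟩} : Set {x // x ∈ X}) : ℝ) / 1,
      {⟨v₀, hv₀⟩}, Set.singleton_nonempty _, ?_, ?_⟩
    · rw [Set.ncard_singleton, hcardV]; omega
    · rw [Set.ncard_singleton]; norm_num
  · rintro r ⟨S, hSne, hSle, rfl⟩
    have hkey := key S hSle
    have hpos : 0 < S.ncard := (Set.ncard_pos (Set.toFinite S)).2 hSne
    rw [one_le_div (by exact_mod_cast hpos)]
    exact_mod_cast hkey
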